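/- Every partial lattice (in particular every lattice) P satisfying Whitman's Condition (W) is projective with respect to the class of lattices without infinite chains: if K and L are lattices with no infinite chains, h : L → K is a surjective lattice homomorphism, and f : P → K is a homomorphism of partial lattices, then there is a homomorphism g : P → L of partial lattices with f = h ∘ g. -/

import Mathlib

/-- A partial lattice structure on a poset `P`: partial join and meet operations
on nonempty finite subsets, returning (when defined) a least upper bound,
resp. a greatest lower bound. -/
structure PartialLatticeStr (P : Type*) [PartialOrder P] where
  pSup : Finset P → Option P
  pInf : Finset P → Option P
  pSup_empty : pSup ∅ = none
  pInf_empty : pInf ∅ = none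
  pSup_spec : ∀ (X : Finset P) (a : P), pSup X = some a →
    ∀ c : P, (a ≤ c ↔ ∀ x ∈ X, x ≤ c)
  pInf_spec : ∀ (X : Finset P) (a : P), pInf X = some a →
    ∀ c : P, (c ≤ a ↔ ∀ x ∈ X, c ≤ x)

/-- A homomorphism of partial lattices from `(P, pl)` into a lattice `K`:
an isotone map preserving all defined joins and meets. -/
def IsPLHom {P K : Type*} [PartialOrder P] [Lattice K]
    (pl : PartialLatticeStr P) (f : P → K) : Prop :=
  Monotone f ∧
  (∀ (X : Finset P) (hX : X.Nonempty) (a : P), pl.pSup X = some a →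
    f a = X.sup' hX f) ∧
  (∀ (X : Finset P) (hX : X.Nonempty) (a : P), pl.pInf X = some a →
    f a = X.inf' hX f)

/-- Whitman's condition (W) for a partial lattice. -/
def WhitmanPL {P : Type*} [PartialOrder P] (pl : PartialLatticeStr P) : Prop :=
  ∀ (U V : Finset P) (a b : P), pl.pInf U = some a → pl.pSup V = some b →
    a ≤ b → (∃ u ∈ U, u ≤ b) ∨ (∃ v ∈ V, a ≤ v)

/-- A nonempty chain in a poset without infinite chains has a greatest element. -/
lemma chainfin_exists_max {L : Type*} [PartialOrder L]
    (hL : ∀ s : Set L, IsChain (· ≤ ·) s → s.Finite)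
    {c : Set L} (hc : IsChain (· ≤ ·) c) (hne : c.Nonempty) :
    ∃ m ∈ c, ∀ x ∈ c, x ≤ m := by
  obtain ⟨m, hm, hmax⟩ := Set.Finite.exists_maximalFor id c (hL c hc) hne
  refine ⟨m, hm, fun x hx => ?_⟩
  rcases eq_or_ne x m with rfl | hne'
  · exact le_rfl
  · rcases hc hx hm hne' with h1 | h1
    · exact h1
    · exact hmax hx h1

/-- A nonempty chain in a poset without infinite chains has a least element. -/
lemma chainfin_exists_min {L : Type*} [PartialOrder L]
    (hL : ∀ s : Set L, IsChain (· ≤ ·) s → s.Finite)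
    {c : Set L} (hc : IsChain (· ≤ ·) c) (hne : c.Nonempty) :
    ∃ m ∈ c, ∀ x ∈ c, m ≤ x := by
  obtain ⟨m, hm, hmin⟩ := Set.Finite.exists_minimalFor id c (hL c hc) hne
  refine ⟨m, hm, fun x hx => ?_⟩
  rcases eq_or_ne x m with rfl | hne'
  · exact le_rfl
  · rcases hc hx hm hne' with h1 | h1
    · exact hmin hx h1
    · exact h1

/-- In a lattice without infinite chains, every nonempty meet-closed subset
has a least element. -/
lemma exists_least_mem {L : Type*} [Lattice L]
    (hL : ∀ s : Set L, IsChain (· ≤ ·) s → s.Finite)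
    (S : Set L) (hne : S.Nonempty)
    (hmeet : ∀ x ∈ S, ∀ y ∈ S, x ⊓ y ∈ S) :
    ∃ m ∈ S, ∀ x ∈ S, m ≤ x := by
  -- Zorn's lemma in the dual order: S has a minimal element.
  have hmin : ∃ m, m ∈ S ∧ ∀ y ∈ S, y ≤ m → m ≤ y := by
    obtain ⟨x0, hx0⟩ := hne
    have := zorn_le_nonempty₀ (α := Lᵒᵈ) (OrderDual.ofDual ⁻¹' S) ?_
      (OrderDual.toDual x0) hx0
    · obtain ⟨m, -, hmem, hmax⟩ := this
      exact ⟨OrderDual.ofDual m, hmem, fun y hy hle => hmax (y := OrderDual.toDual y) hy hle⟩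
    · intro c hcS hchain y hyc
      -- c, viewed in L, is a chain; take its least element.
      have hchainL : IsChain (· ≤ ·) (OrderDual.ofDual '' c) := by
        rintro _ ⟨p, hp, rfl⟩ _ ⟨q, hq, rfl⟩ hpq
        have hpq' : p ≠ q := fun e => hpq (by rw [e])
        rcases hchain hp hq hpq' with h1 | h1
        · exact Or.inr h1
        · exact Or.inl h1
      obtain ⟨m, hmc, hmle⟩ := chainfin_exists_min hL hchainL
        ⟨OrderDual.ofDual y, ⟨y, hyc, rfl⟩⟩
      obtain ⟨m', hm'c, rfl⟩ := hmc
      exact ⟨m', hcS hm'c, fun z hz => hmle _ ⟨z, hz, rfl⟩⟩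
  obtain ⟨m, hmS, hmax⟩ := hmin
  refine ⟨m, hmS, fun x hx => ?_⟩
  have h1 : m ⊓ x ∈ S := hmeet m hmS x hx
  exact (hmax _ h1 inf_le_left).trans inf_le_right

/-- Every partial lattice satisfying Whitman's condition (W) is projective with
respect to the class of lattices without infinite chains: if `K`, `L` have no
infinite chains, `h : L → K` is a surjective lattice homomorphism and
`f : P → K` is a homomorphism of partial lattices, then `f = h ∘ g` for some
homomorphism `g : P → L` of partial lattices. -/
theorem whitman_partial_lattice_projective_no_infinite_chains
    {P K L : Type*} [PartialOrder P] [Lattice K] [Lattice L]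
    (pl : PartialLatticeStr P) (hW : WhitmanPL pl)
    (hKchain : ∀ s : Set K, IsChain (· ≤ ·) s → s.Finite)
    (hLchain : ∀ s : Set L, IsChain (· ≤ ·) s → s.Finite)
    (h : LatticeHom L K) (hsurj : Function.Surjective h)
    (f : P → K) (hf : IsPLHom pl f) :
    ∃ g : P → L, IsPLHom pl g ∧ f = h ∘ g := by
  classical
  obtain ⟨fmono, fsup, finf⟩ := hf
  -- Each fiber of h has a least element; this gives the lower adjoint β.
  have fiber_least : ∀ x : K, ∃ m : L, h m = x ∧ ∀ y : L, h y = x → m ≤ y := by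
    intro x
    obtain ⟨m, hmS, hleast⟩ := exists_least_mem hLchain {y : L | h y = x} (hsurj x)
      (fun a ha b hb => by
        simp only [Set.mem_setOf_eq] at ha hb ⊢
        rw [map_inf, ha, hb, inf_idem])
    exact ⟨m, hmS, hleast⟩
  choose β hβ hβle using fiber_least
  have hβmono : Monotone β := by
    intro x y hxy
    have hxy' : h (β x ⊓ β y) = x := by
      rw [map_inf, hβ, hβ, inf_eq_left.mpr hxy]
    exact (hβle x _ hxy').trans inf_le_right
  -- The set of "partial solutions": fiber-preserving, monotone, join-preserving maps.
  set G : Set (P → L) := {g | (∀ p, h (g p) = f p) ∧ Monotone g ∧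
    ∀ (X : Finset P) (hX : X.Nonempty) (a : P), pl.pSup X = some a → g a = X.sup' hX g}
    with hGdef
  have hg0 : (β ∘ f) ∈ G := by
    refine ⟨fun p => hβ _, hβmono.comp fmono, ?_⟩
    intro X hX a ha
    have hfa : f a = X.sup' hX f := fsup X hX a ha
    apply le_antisymm
    · apply hβle
      rw [map_finset_sup' h hX]
      rw [hfa]
      exact Finset.sup'_congr hX rfl (fun x _ => hβ (f x))
    · apply Finset.sup'_le
      intro x hx
      exact hβmono (by rw [hfa]; exact Finset.le_sup' f hx)
  -- Zorn's lemma: there is a maximal partial solution.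
  have hzorn : ∃ m, (β ∘ f) ≤ m ∧ Maximal (· ∈ G) m := by
    apply zorn_le_nonempty₀ G ?_ (β ∘ f) hg0
    intro c hcG hchain y hyc
    -- pointwise maxima along the chain
    have hpt : ∀ p : P, ∃ g ∈ c, ∀ g' ∈ c, g' p ≤ g p := by
      intro p
      have hchainp : IsChain (· ≤ ·) ((fun g : P → L => g p) '' c) := by
        rintro _ ⟨g1, hg1, rfl⟩ _ ⟨g2, hg2, rfl⟩ hne
        have hne' : g1 ≠ g2 := fun e => hne (by rw [e])
        rcases hchain hg1 hg2 hne' with h1 | h1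
        · exact Or.inl (h1 p)
        · exact Or.inr (h1 p)
      obtain ⟨m, hmc, hmax⟩ := chainfin_exists_max hLchain hchainp ⟨y p, ⟨y, hyc, rfl⟩⟩
      obtain ⟨g, hgc, rfl⟩ := hmc
      exact ⟨g, hgc, fun g' hg' => hmax _ ⟨g', hg', rfl⟩⟩
    choose gsel hgsel₁ hgsel₂ using hpt
    set ub : P → L := fun p => gsel p p with hubdef
    -- a single chain element dominating ub on any finite set of points
    have hdom : ∀ F : Finset P, ∃ g ∈ c, ∀ p ∈ F, ub p = g p := by
      intro F
      induction F using Finset.induction_on with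
      | empty => exact ⟨y, hyc, by simp⟩
      | insert p F hpF ih =>
        obtain ⟨g1, hg1, hdo⟩ := ih
        rcases hchain.total hg1 (hgsel₁ p) with h12 | h21
        · refine ⟨gsel p, hgsel₁ p, ?_⟩
          intro q hq
          rcases Finset.mem_insert.mp hq with rfl | hqF
          · rfl
          · exact le_antisymm ((hdo q hqF).le.trans (h12 q)) (hgsel₂ q _ (hgsel₁ p))
        · refine ⟨g1, hg1, ?_⟩
          intro q hq
          rcases Finset.mem_insert.mp hq with rfl | hqF
          · exact le_antisymm (h21 q) (hgsel₂ q _ hg1)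
          · exact hdo q hqF
    refine ⟨ub, ?_, fun g' hg' p => hgsel₂ p g' hg'⟩
    refine ⟨fun p => (hcG (hgsel₁ p)).1 p, ?_, ?_⟩
    · intro p q hpq
      calc ub p = gsel p p := rfl
        _ ≤ gsel p q := (hcG (hgsel₁ p)).2.1 hpq
        _ ≤ ub q := hgsel₂ q _ (hgsel₁ p)
    · intro X hX a ha
      obtain ⟨g, hgc, hgeq⟩ := hdom (insert a X)
      have hga : ub a = g a := hgeq a (Finset.mem_insert_self a X)
      rw [hga, (hcG hgc).2.2 X hX a ha]
      exact Finset.sup'_congr hX rfl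
        (fun x hx => (hgeq x (Finset.mem_insert_of_mem hx)).symm)
  obtain ⟨g, -, hgmax⟩ := hzorn
  obtain ⟨ghom, gmono, gsup⟩ := hgmax.1
  -- Maximality plus Whitman's condition gives meet preservation.
  have ginf : ∀ (X : Finset P) (hX : X.Nonempty) (a : P),
      pl.pInf X = some a → g a = X.inf' hX g := by
    intro X hX a ha
    have haX : ∀ x ∈ X, a ≤ x := fun x hx => (pl.pInf_spec X a ha a).mp le_rfl x hx
    set m := X.inf' hX g with hmdef
    have hga_le : g a ≤ m := Finset.le_inf' hX _ (fun x hx => gmono (haX x hx))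
    have hhm : h m = f a := by
      rw [hmdef, map_finset_inf' h hX, finf X hX a ha]
      exact Finset.inf'_congr hX rfl (fun x _ => ghom x)
    set g' : P → L := fun p => if a ≤ p then g p ⊔ m else g p with hg'def
    have hg'ge : g ≤ g' := by
      intro p
      by_cases hap : a ≤ p
      · simp only [hg'def, if_pos hap]; exact le_sup_left
      · simp only [hg'def, if_neg hap]; exact le_rfl
    have hg'G : g' ∈ G := by
      refine ⟨?_, ?_, ?_⟩
      · intro p
        by_cases hap : a ≤ p
        · simp only [hg'def, if_pos hap]
          rw [map_sup, ghom p, hhm]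
          exact sup_eq_left.mpr (fmono hap)
        · simp only [hg'def, if_neg hap]; exact ghom p
      · intro p q hpq
        by_cases hap : a ≤ p
        · have haq : a ≤ q := hap.trans hpq
          simp only [hg'def, if_pos hap, if_pos haq]
          exact sup_le_sup_right (gmono hpq) m
        · by_cases haq : a ≤ q
          · simp only [hg'def, if_neg hap, if_pos haq]
            exact (gmono hpq).trans le_sup_left
          · simp only [hg'def, if_neg hap, if_neg haq]
            exact gmono hpq
      · intro Y hY b hb
        have hYb : ∀ v ∈ Y, v ≤ b := fun v hv => (pl.pSup_spec Y b hb b).mp le_rfl v hv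
        have hmono' : Monotone g' := by
          intro p q hpq
          by_cases hap : a ≤ p
          · have haq : a ≤ q := hap.trans hpq
            simp only [hg'def, if_pos hap, if_pos haq]
            exact sup_le_sup_right (gmono hpq) m
          · by_cases haq : a ≤ q
            · simp only [hg'def, if_neg hap, if_pos haq]
              exact (gmono hpq).trans le_sup_left
            · simp only [hg'def, if_neg hap, if_neg haq]
              exact gmono hpq
        have hle_sup : Y.sup' hY g ≤ Y.sup' hY g' :=
          Finset.sup'_le hY g fun x hx => (hg'ge x).trans (Finset.le_sup' g' hx)
        apply le_antisymm
        · by_cases hab : a ≤ b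
          · simp only [hg'def, if_pos hab]
            apply sup_le
            · rw [gsup Y hY b hb]; exact hle_sup
            · rcases hW X Y a b ha hb hab with ⟨u, huX, hub⟩ | ⟨v, hvY, hav⟩
              · calc m ≤ g u := Finset.inf'_le g huX
                  _ ≤ g b := gmono hub
                  _ = Y.sup' hY g := gsup Y hY b hb
                  _ ≤ Y.sup' hY g' := hle_sup
              · calc m ≤ g' v := by
                      simp only [hg'def, if_pos hav]; exact le_sup_right
                  _ ≤ Y.sup' hY g' := Finset.le_sup' g' hvY
          · simp only [hg'def, if_neg hab]
            rw [gsup Y hY b hb]; exact hle_sup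
        · exact Finset.sup'_le hY g' fun x hx => hmono' (hYb x hx)
    have hle : g' ≤ g := hgmax.2 hg'G hg'ge
    have hma : m ≤ g a := by
      have h1 := hle a
      simp only [hg'def, if_pos (le_refl a)] at h1
      exact le_sup_right.trans h1
    exact le_antisymm hga_le hma
  exact ⟨g, ⟨gmono, gsup, ginf⟩, funext fun p => (ghom p).symm⟩
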